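/- Let G = (V, E) be a finite simple undirected graph with N = |V| ≥ 3, let B ⊆ E, let t = ⌊|B|/2⌋, and let W_{G,B} be the workflow authorization policy constructed from (G, B). Let Δ ⊆ U with |Δ| ≤ t, and let D(Δ) = { e ∈ B : (e,1) ∈ Δ }. Then there exists a valid plan of W_{G,B} assigning no user from Δ if and only if the graph G_{D(Δ)} = (V, E ∖ D(Δ)) has a Hamiltonian cycle. -/
import Mathlib


/-- A workflow authorization policy `W = (S, ≼, U, A, C)`:
steps `S`, an ordering relation `ord` (the partial order `≼`), users `U`,
a step authorization relation `A ⊆ S × U`, and a set `C` of constraints.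
A constraint is a pair `(T, Θ)` where `T ⊆ S` and `Θ` is a set of functions
from `T` to `U` (represented as `σ → Option υ` with domain exactly `T`). -/
structure WAP (σ υ : Type) where
  S : Finset σ
  ord : σ → σ → Prop
  U : Finset υ
  A : Set (σ × υ)
  C : Set (Finset σ × Set (σ → Option υ))

namespace WAP

variable {σ υ : Type} [DecidableEq σ] [DecidableEq υ]

/-- Well-formedness: `ord` is a partial order on `S`, `A ⊆ S × U`, and every
constraint `(T, Θ)` has `T ⊆ S` and `Θ` a set of functions from `T` to `U`. -/
def WellFormed (W : WAP σ υ) : Prop :=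
  (∀ s ∈ W.S, W.ord s s) ∧
  (∀ s₁ ∈ W.S, ∀ s₂ ∈ W.S, W.ord s₁ s₂ → W.ord s₂ s₁ → s₁ = s₂) ∧
  (∀ s₁ ∈ W.S, ∀ s₂ ∈ W.S, ∀ s₃ ∈ W.S, W.ord s₁ s₂ → W.ord s₂ s₃ → W.ord s₁ s₃) ∧
  (∀ p ∈ W.A, p.1 ∈ W.S ∧ p.2 ∈ W.U) ∧
  (∀ c ∈ W.C, c.1 ⊆ W.S ∧
    ∀ θ ∈ c.2, (∀ s, θ s ≠ none ↔ s ∈ c.1) ∧ ∀ s u, θ s = some u → u ∈ W.U)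

/-- A partial plan: a partial function from `S` to `U` whose domain is
causally closed (if `s₁` is assigned and `s₂ ≺ s₁` then `s₂` is assigned). -/
def IsPartialPlan (W : WAP σ υ) (θ : σ → Option υ) : Prop :=
  (∀ s u, θ s = some u → s ∈ W.S ∧ u ∈ W.U) ∧
  ∀ s₁ s₂, s₁ ∈ W.S → s₂ ∈ W.S → θ s₁ ≠ none → W.ord s₂ s₁ → s₂ ≠ s₁ → θ s₂ ≠ none

/-- Restriction of a partial plan to a set `T` of steps. -/
def restrictTo (θ : σ → Option υ) (T : Finset σ) : σ → Option υ :=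
  fun s => if s ∈ T then θ s else none

/-- Validity of a (partial) plan: every assignment is authorized, and every
constraint whose step set is contained in the domain is satisfied. -/
def Valid (W : WAP σ υ) (θ : σ → Option υ) : Prop :=
  (∀ s u, θ s = some u → (s, u) ∈ W.A) ∧
  ∀ c ∈ W.C, (∀ s ∈ c.1, θ s ≠ none) → restrictTo θ c.1 ∈ c.2

/-- A plan: a partial plan whose domain is all of `S`. -/
def IsPlan (W : WAP σ υ) (θ : σ → Option υ) : Prop :=
  W.IsPartialPlan θ ∧ ∀ s ∈ W.S, θ s ≠ none

def IsValidPlan (W : WAP σ υ) (θ : σ → Option υ) : Prop :=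
  W.IsPlan θ ∧ W.Valid θ

/-- `θ` assigns no user from `Δ`. -/
def Avoids (θ : σ → Option υ) (Δ : Finset υ) : Prop :=
  ∀ s u, θ s = some u → u ∉ Δ

/-- Static resiliency for budget `t`. -/
def StaticallyResilient (W : WAP σ υ) (t : ℕ) : Prop :=
  ∀ Δ : Finset υ, Δ ⊆ W.U → Δ.card ≤ t → ∃ θ, W.IsValidPlan θ ∧ Avoids θ Δ

/-- A move of Player 1: assign a user `u ∈ U ∖ Δ` to a not-yet-assigned step,
so that the result remains a causally closed partial plan and remains valid
(if the extension were invalid, Player 2 would win at once). -/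
def P1Move (W : WAP σ υ) (Δ : Finset υ) (θ θ' : σ → Option υ) : Prop :=
  ∃ s u, s ∈ W.S ∧ θ s = none ∧ u ∈ W.U ∧ u ∉ Δ ∧
    θ' = Function.update θ s (some u) ∧
    W.IsPartialPlan θ' ∧ W.Valid θ'

/-- A move of Player 2 in the one-shot resiliency game: either pass, or
(if it has not yet struck) strike, adding at most `t` users of `U` to `Δ`. -/
def OneShotP2Move (W : WAP σ υ) (t : ℕ) (Δ : Finset υ) (struck : Bool)
    (Δ' : Finset υ) (struck' : Bool) : Prop :=
  (Δ' = Δ ∧ struck' = struck) ∨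
  (struck = false ∧ struck' = true ∧ Δ ⊆ Δ' ∧ Δ' ⊆ W.U ∧ (Δ' \ Δ).card ≤ t)

/-- Player 1 can force a win of the one-shot resiliency game within `n`
more rounds, from the given configuration (`struck` records whether
Player 2 has already struck).  Player 1 has won once the (valid) partial
plan has been extended to a valid plan on all of `S`; otherwise, for every
move of Player 2 there must be a move of Player 1 from which Player 1 can
still force a win.  Since each round assigns one more step, the game from
the initial configuration lasts at most `|S|` rounds. -/
def OneShotWins (W : WAP σ υ) (t : ℕ) :
    ℕ → Finset υ → (σ → Option υ) → Bool → Prop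
  | 0, _, θ, _ => (∀ s ∈ W.S, θ s ≠ none) ∧ W.IsPartialPlan θ ∧ W.Valid θ
  | n + 1, Δ, θ, struck =>
      ((∀ s ∈ W.S, θ s ≠ none) ∧ W.IsPartialPlan θ ∧ W.Valid θ) ∨
      ((∃ s ∈ W.S, θ s = none) ∧
        ∀ Δ' struck', OneShotP2Move W t Δ struck Δ' struck' →
          ∃ θ', P1Move W Δ' θ θ' ∧ OneShotWins W t n Δ' θ' struck')

/-- One-shot resiliency for budget `t`: Player 1 wins the one-shot
resiliency game (from the initial configuration `(∅, ∅)`) no matter how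
Player 2 plays. -/
def OneShotResilient (W : WAP σ υ) (t : ℕ) : Prop :=
  OneShotWins W t W.S.card ∅ (fun _ => none) false

/-- A move of Player 2 in the decremental resiliency game: add zero or more
users of `U` to `Δ`, subject to `|Δ| ≤ t` throughout. -/
def DecP2Move (W : WAP σ υ) (t : ℕ) (Δ Δ' : Finset υ) : Prop :=
  Δ ⊆ Δ' ∧ Δ' ⊆ W.U ∧ Δ'.card ≤ t

/-- Player 1 can force a win of the decremental resiliency game within `n`
more rounds. -/
def DecWins (W : WAP σ υ) (t : ℕ) : ℕ → Finset υ → (σ → Option υ) → Prop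
  | 0, _, θ => (∀ s ∈ W.S, θ s ≠ none) ∧ W.IsPartialPlan θ ∧ W.Valid θ
  | n + 1, Δ, θ =>
      ((∀ s ∈ W.S, θ s ≠ none) ∧ W.IsPartialPlan θ ∧ W.Valid θ) ∨
      ((∃ s ∈ W.S, θ s = none) ∧
        ∀ Δ', DecP2Move W t Δ Δ' →
          ∃ θ', P1Move W Δ' θ θ' ∧ DecWins W t n Δ' θ')

/-- Decremental resiliency for budget `t`: Player 1 wins the decremental
resiliency game no matter how Player 2 plays. -/
def DecrementallyResilient (W : WAP σ υ) (t : ℕ) : Prop :=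
  DecWins W t W.S.card ∅ (fun _ => none)

end WAP
section GraphConstruction

open WAP

variable {V : Type} [Fintype V] [DecidableEq V]

/-- A user of `W_{G,B}`: either a vertex user `(v, j)` or an edge user `(e, l)`. -/
abbrev UserGB (V : Type) := Sum (V × ℕ) (Sym2 V × ℕ)

/-- The successor index modulo `N` (so `sv_{i+1}` after `sv_i`, wrapping around). -/
def nextFin {N : ℕ} (i : Fin N) : Fin N :=
  ⟨(i.1 + 1) % N, Nat.mod_lt _ (Nat.lt_of_le_of_lt (Nat.zero_le _) i.isLt)⟩

/-- The type-1 entailment constraint `ent(ρ, s, s')`: the constraint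
`({s, s'}, Θ)` where `Θ` is the set of functions `θ : {s, s'} → U` with
`(θ(s), θ(s')) ∈ ρ`. -/
def entCon {σ υ : Type} [DecidableEq σ] (U : Finset υ) (ρ : υ → υ → Prop)
    (s s' : σ) : Finset σ × Set (σ → Option υ) :=
  ({s, s'},
   {θ | (∀ x, θ x ≠ none ↔ x ∈ ({s, s'} : Finset σ)) ∧
        (∀ x v, θ x = some v → v ∈ U) ∧
        ∃ a b, θ s = some a ∧ θ s' = some b ∧ ρ a b})

/-- The vertex users: `(v, j)` for `v ∈ V` and `1 ≤ j ≤ t+1`. -/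
def UVfin (V : Type) [Fintype V] [DecidableEq V] (t : ℕ) : Finset (UserGB V) :=
  (Finset.univ ×ˢ Finset.Icc 1 (t + 1)).image Sum.inl

/-- The edge users: `(e, l)` for `e ∈ E`, with `1 ≤ l ≤ t+1` if `e ∉ B` and
`l = 1` if `e ∈ B`. -/
def UEfin (G : SimpleGraph V) [DecidableRel G.Adj] (B : Finset (Sym2 V))
    (t : ℕ) : Finset (UserGB V) :=
  (G.edgeFinset.biUnion
    (fun e => ({e} : Finset (Sym2 V)) ×ˢ
      (if e ∈ B then ({1} : Finset ℕ) else Finset.Icc 1 (t + 1)))).image Sum.inr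

/-- `incident`: relates an edge user `(e, l)` to a vertex user `(v, j)` where
`v` is one of the two endpoints of `e`. -/
def incidentRel (G : SimpleGraph V) : UserGB V → UserGB V → Prop :=
  fun a b => ∃ e l v j, a = Sum.inr (e, l) ∧ b = Sum.inl (v, j) ∧
    e ∈ G.edgeSet ∧ v ∈ e

/-- `distinct`: relates vertex users representing distinct vertices. -/
def distinctRel (V : Type) : UserGB V → UserGB V → Prop :=
  fun a b => ∃ v i w j, a = Sum.inl (v, i) ∧ b = Sum.inl (w, j) ∧ v ≠ w

/-- The workflow authorization policy `W_{G,B}` built from a finite simple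
graph `G = (V, E)` and an edge set `B ⊆ E`, with budget `t = ⌊|B|/2⌋`.
Steps: `Sum.inl i` is `sv_{i+1}` and `Sum.inr i` is `se_{i+1}` (0-indexed),
the order `≼` is equality.  Constraints:  `C₁ ∪ C₂ ∪ C₃ ∪ C_ham` where
`C₁ = {ent(incident⁻¹, sv_i, se_i)}`, `C₂ ∪ C₃ = {ent(incident, se_i, sv_{i+1 mod N})}`,
and `C_ham = {ent(distinct, sv_i, sv_j) : i < j}`. -/
def WGB (G : SimpleGraph V) [DecidableRel G.Adj] (B : Finset (Sym2 V)) :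
    WAP (Sum (Fin (Fintype.card V)) (Fin (Fintype.card V))) (UserGB V) :=
  { S := Finset.univ
    ord := Eq
    U := UVfin V (B.card / 2) ∪ UEfin G B (B.card / 2)
    A := {p | match p.1 with
              | Sum.inl _ => p.2 ∈ UVfin V (B.card / 2)
              | Sum.inr _ => p.2 ∈ UEfin G B (B.card / 2)}
    C := {c | ∃ i : Fin (Fintype.card V),
            c = entCon (UVfin V (B.card / 2) ∪ UEfin G B (B.card / 2))
                  (fun a b => incidentRel G b a) (Sum.inl i) (Sum.inr i)} ∪
         {c | ∃ i : Fin (Fintype.card V),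
            c = entCon (UVfin V (B.card / 2) ∪ UEfin G B (B.card / 2))
                  (incidentRel G) (Sum.inr i) (Sum.inl (nextFin i))} ∪
         {c | ∃ i j : Fin (Fintype.card V), i < j ∧
            c = entCon (UVfin V (B.card / 2) ∪ UEfin G B (B.card / 2))
                  (distinctRel V) (Sum.inl i) (Sum.inl j)} }

/-- `v₁, e₁, v₂, e₂, …, v_N, e_N` is a Hamiltonian cycle of `G`: the `v_i`
are pairwise distinct and cover all of `V`, and each `e_i` is an edge of `G`
joining `v_i` and `v_{i+1}` (indices modulo `N`). -/
def IsHamCycle (G : SimpleGraph V) (v : Fin (Fintype.card V) → V)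
    (e : Fin (Fintype.card V) → Sym2 V) : Prop :=
  Function.Injective v ∧ (∀ x : V, ∃ i, v i = x) ∧
  ∀ i, e i ∈ G.edgeSet ∧ e i = s(v i, v (nextFin i))

end GraphConstruction


section Aux

open WAP Finset

lemma nextFin_ne {N : ℕ} (hN : 2 ≤ N) (i : Fin N) : nextFin i ≠ i := by
  intro h
  have hv : (i.1 + 1) % N = i.1 := congrArg Fin.val h
  have hi := i.isLt
  rcases Nat.lt_or_ge (i.1 + 1) N with h' | h'
  · rw [Nat.mod_eq_of_lt h'] at hv; omega
  · have hN1 : i.1 + 1 = N := by omega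
    rw [hN1, Nat.mod_self] at hv; omega

lemma exists_notin_of_card {α : Type*} [DecidableEq α] (Δ : Finset α) (t : ℕ)
    (h : Δ.card ≤ t) (f : ℕ → α) (hf : Function.Injective f) :
    ∃ k ∈ Finset.Icc 1 (t + 1), f k ∉ Δ := by
  by_contra hc
  push_neg at hc
  have hsub : (Finset.Icc 1 (t + 1)).image f ⊆ Δ := by
    intro x hx
    obtain ⟨k, hk, rfl⟩ := Finset.mem_image.mp hx
    exact hc k hk
  have hcard := Finset.card_le_card hsub
  rw [Finset.card_image_of_injective _ hf, Nat.card_Icc] at hcard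
  omega

lemma restrictTo_eq_of_mem {σ υ : Type} [DecidableEq σ] (θ : σ → Option υ)
    {T : Finset σ} {s : σ} (h : s ∈ T) : WAP.restrictTo θ T s = θ s := if_pos h

lemma entCon_fst {σ υ : Type} [DecidableEq σ] (U : Finset υ) (ρ : υ → υ → Prop)
    (s s' : σ) : (entCon (υ := υ) U ρ s s').1 = {s, s'} := rfl

lemma mem_entCon_fst_left {σ υ : Type} [DecidableEq σ] (U : Finset υ)
    (ρ : υ → υ → Prop) (s s' : σ) : s ∈ (entCon (υ := υ) U ρ s s').1 :=
  Finset.mem_insert_self _ _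

lemma mem_entCon_fst_right {σ υ : Type} [DecidableEq σ] (U : Finset υ)
    (ρ : υ → υ → Prop) (s s' : σ) : s' ∈ (entCon (υ := υ) U ρ s s').1 :=
  Finset.mem_insert_of_mem (Finset.mem_singleton_self _)

lemma entCon_elim {σ υ : Type} [DecidableEq σ] {U : Finset υ} {ρ : υ → υ → Prop}
    {s s' : σ} {θ : σ → Option υ}
    (h : WAP.restrictTo θ (entCon U ρ s s').1 ∈ (entCon U ρ s s').2) :
    ∃ a b, θ s = some a ∧ θ s' = some b ∧ ρ a b := by
  obtain ⟨-, -, a, b, ha, hb, hab⟩ := h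
  rw [restrictTo_eq_of_mem θ (mem_entCon_fst_left U ρ s s')] at ha
  rw [restrictTo_eq_of_mem θ (mem_entCon_fst_right U ρ s s')] at hb
  exact ⟨a, b, ha, hb, hab⟩

lemma restrictTo_mem_entCon {σ υ : Type} [DecidableEq σ] (U : Finset υ)
    (ρ : υ → υ → Prop) (s s' : σ) (θ : σ → Option υ)
    (hdom : ∀ x, θ x ≠ none)
    (hU : ∀ x u, θ x = some u → u ∈ U)
    (a b : υ) (ha : θ s = some a) (hb : θ s' = some b) (hab : ρ a b) :
    WAP.restrictTo θ (entCon U ρ s s').1 ∈ (entCon U ρ s s').2 := by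
  refine ⟨?_, ?_, a, b, ?_, ?_, hab⟩
  · intro x
    unfold WAP.restrictTo
    split
    · exact ⟨fun _ => by assumption, fun _ => hdom x⟩
    · exact ⟨fun hx => absurd rfl hx, fun hx => absurd hx (by assumption)⟩
  · intro x u hu
    unfold WAP.restrictTo at hu
    split at hu
    · exact hU x u hu
    · exact absurd hu (by simp)
  · rw [restrictTo_eq_of_mem θ (mem_entCon_fst_left U ρ s s')]; exact ha
  · rw [restrictTo_eq_of_mem θ (mem_entCon_fst_right U ρ s s')]; exact hb

variable {V : Type} [Fintype V] [DecidableEq V]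

lemma mem_UVfin {t : ℕ} {u : UserGB V} :
    u ∈ UVfin V t ↔ ∃ v k, k ∈ Finset.Icc 1 (t + 1) ∧ u = Sum.inl (v, k) := by
  simp only [UVfin, Finset.mem_image, Finset.mem_product, Finset.mem_univ, true_and,
    Prod.exists]
  constructor
  · rintro ⟨v, k, hk, rfl⟩; exact ⟨v, k, hk, rfl⟩
  · rintro ⟨v, k, hk, rfl⟩; exact ⟨v, k, hk, rfl⟩

lemma mem_UEfin (G : SimpleGraph V) [DecidableRel G.Adj] {B : Finset (Sym2 V)}
    {t : ℕ} {u : UserGB V} :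
    u ∈ UEfin G B t ↔ ∃ e k, e ∈ G.edgeFinset ∧
      k ∈ (if e ∈ B then ({1} : Finset ℕ) else Finset.Icc 1 (t + 1)) ∧
      u = Sum.inr (e, k) := by
  simp only [UEfin, Finset.mem_image, Finset.mem_biUnion, Finset.mem_product,
    Finset.mem_singleton, Prod.exists]
  constructor
  · rintro ⟨e, k, ⟨e2, he2, rfl, hk⟩, rfl⟩
    exact ⟨e, k, he2, hk, rfl⟩
  · rintro ⟨e, k, he, hk, rfl⟩
    exact ⟨e, k, ⟨e, he, rfl, hk⟩, rfl⟩

end Aux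

/-- For `Δ ⊆ U` with `|Δ| ≤ t` and
`D(Δ) = {e ∈ B : (e,1) ∈ Δ}`, there is a valid plan of `W_{G,B}` assigning no
user from `Δ` iff the graph `G_{D(Δ)} = (V, E ∖ D(Δ))` has a Hamiltonian
cycle. -/
theorem WGB_validPlan_avoiding_iff_hamCycle_deleteEdges
    {V : Type} [Fintype V] [DecidableEq V]
    (G : SimpleGraph V) [DecidableRel G.Adj]
    (hN : 3 ≤ Fintype.card V)
    (B : Finset (Sym2 V)) (hB : ↑B ⊆ G.edgeSet)
    (Δ : Finset (UserGB V)) (hΔU : Δ ⊆ (WGB G B).U)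
    (hΔcard : Δ.card ≤ B.card / 2) :
    (∃ θ, (WGB G B).IsValidPlan θ ∧ WAP.Avoids θ Δ) ↔
      ∃ (v : Fin (Fintype.card V) → V) (e : Fin (Fintype.card V) → Sym2 V),
        IsHamCycle (G.deleteEdges {e' : Sym2 V | e' ∈ B ∧ Sum.inr (e', 1) ∈ Δ})
          v e := by
  classical
  set t := B.card / 2 with ht
  set N := Fintype.card V with hNdef
  set D : Set (Sym2 V) := {e' : Sym2 V | e' ∈ B ∧ Sum.inr (e', 1) ∈ Δ} with hD
  have hN2 : 2 ≤ N := le_trans (by norm_num) hN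
  constructor
  · rintro ⟨θ, ⟨⟨⟨hmemU, _⟩, hdom'⟩, hauth, hcon⟩, havoid⟩
    have hdom : ∀ s, θ s ≠ none := fun s => hdom' s (Finset.mem_univ s)
    -- extract from C₁
    have key : ∀ i : Fin N, ∃ (vi : V) (ji : ℕ) (ei : Sym2 V) (li : ℕ),
        θ (Sum.inl i) = some (Sum.inl (vi, ji)) ∧
        θ (Sum.inr i) = some (Sum.inr (ei, li)) ∧ ei ∈ G.edgeSet ∧ vi ∈ ei := by
      intro i
      obtain ⟨a, b, ha, hb, hrel⟩ :=
        entCon_elim (hcon _ (Or.inl (Or.inl ⟨i, rfl⟩)) (fun s _ => hdom s))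
      obtain ⟨e0, l0, v0, j0, hbeq, haeq, hE0, hv0⟩ := hrel
      subst hbeq; subst haeq
      exact ⟨v0, j0, e0, l0, ha, hb, hE0, hv0⟩
    choose v j e l hv he hE hvmem using key
    -- C₂: v (nextFin i) ∈ e i
    have hC2 : ∀ i : Fin N, v (nextFin i) ∈ e i := by
      intro i
      obtain ⟨a, b, ha, hb, hrel⟩ :=
        entCon_elim (hcon _ (Or.inl (Or.inr ⟨i, rfl⟩)) (fun s _ => hdom s))
      obtain ⟨e0, l0, v0, j0, haeq, hbeq, hE0, hv0⟩ := hrel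
      subst haeq; subst hbeq
      have h1 := Option.some.inj ((he i).symm.trans ha)
      have h2 := Option.some.inj ((hv (nextFin i)).symm.trans hb)
      injection h1 with h1'
      injection h1' with he0 hl0
      injection h2 with h2'
      injection h2' with hv0' hj0
      rw [he0, hv0']
      exact hv0
    -- C_ham: injectivity
    have hdist : ∀ i i' : Fin N, i < i' → v i ≠ v i' := by
      intro i i' hii
      obtain ⟨a, b, ha, hb, hrel⟩ :=
        entCon_elim (hcon _ (Or.inr ⟨i, i', hii, rfl⟩) (fun s _ => hdom s))
      obtain ⟨v0, i0, w0, j0, haeq, hbeq, hvw⟩ := hrel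
      subst haeq; subst hbeq
      have h1 := Option.some.inj ((hv i).symm.trans ha)
      have h2 := Option.some.inj ((hv i').symm.trans hb)
      injection h1 with h1'
      injection h1' with hv1 hi1
      injection h2 with h2'
      injection h2' with hv2 hi2
      rw [hv1, hv2]
      exact hvw
    have hinj : Function.Injective v := by
      intro i i' hvii
      by_contra hne
      rcases lt_or_gt_of_ne hne with h | h
      · exact hdist i i' h hvii
      · exact hdist i' i h hvii.symm
    have hsurj : ∀ x : V, ∃ i, v i = x := by
      have hbij : Function.Bijective v :=
        (Fintype.bijective_iff_injective_and_card v).2 ⟨hinj, by simp [hNdef]⟩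
      exact fun x => hbij.2 x
    -- e i avoids D
    have heD : ∀ i : Fin N, e i ∉ D := by
      intro i hiD
      obtain ⟨hiB, hiΔ⟩ := hiD
      have hA := hauth _ _ (he i)
      have hU : (Sum.inr (e i, l i) : UserGB V) ∈ UEfin G B t := hA
      obtain ⟨e0, k0, -, hk0, heq0⟩ := (mem_UEfin G).mp hU
      injection heq0 with heq0'
      injection heq0' with he0 hl0
      rw [← he0, if_pos hiB, Finset.mem_singleton] at hk0
      have hli : l i = 1 := hl0.trans hk0
      exact havoid _ _ (he i) (by rw [hli]; exact hiΔ)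
    refine ⟨v, e, hinj, hsurj, fun i => ?_⟩
    have hne : v i ≠ v (nextFin i) := by
      intro hcontra
      exact nextFin_ne hN2 i (hinj hcontra).symm
    have heq : e i = s(v i, v (nextFin i)) :=
      (Sym2.mem_and_mem_iff hne).1 ⟨hvmem i, hC2 i⟩
    refine ⟨?_, heq⟩
    rw [heq, SimpleGraph.mem_edgeSet, SimpleGraph.deleteEdges_adj]
    constructor
    · rw [← SimpleGraph.mem_edgeSet, ← heq]; exact hE i
    · rw [← heq]; exact heD i
  · rintro ⟨v, e, hinj, hsurj, hve⟩
    have hEdel : ∀ i, e i ∈ (G.deleteEdges D).edgeSet := fun i => (hve i).1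
    have hEG : ∀ i, e i ∈ G.edgeSet := fun i =>
      (SimpleGraph.edgeSet_mono (SimpleGraph.deleteEdges_le D)) (hEdel i)
    have hEF : ∀ i, e i ∈ G.edgeFinset := fun i =>
      SimpleGraph.mem_edgeFinset.mpr (hEG i)
    have heD : ∀ i, e i ∉ D := by
      intro i hiD
      have hthis := hEdel i
      rw [(hve i).2, SimpleGraph.mem_edgeSet, SimpleGraph.deleteEdges_adj] at hthis
      exact hthis.2 ((hve i).2 ▸ hiD)
    -- choose vertex user indices
    have hjv : ∀ i : Fin N, ∃ k ∈ Finset.Icc 1 (t + 1),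
        (Sum.inl (v i, k) : UserGB V) ∉ Δ := by
      intro i
      exact exists_notin_of_card Δ t hΔcard (fun k => Sum.inl (v i, k))
        (fun a b hab => by simpa using hab)
    choose jv hjv1 hjv2 using hjv
    have hle : ∀ i : Fin N, ∃ k,
        k ∈ (if e i ∈ B then ({1} : Finset ℕ) else Finset.Icc 1 (t + 1)) ∧
        (Sum.inr (e i, k) : UserGB V) ∉ Δ := by
      intro i
      by_cases hiB : e i ∈ B
      · refine ⟨1, by simp [hiB], fun hmem => heD i ⟨hiB, hmem⟩⟩
      · obtain ⟨k, hk1, hk2⟩ := exists_notin_of_card Δ t hΔcard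
          (fun k => (Sum.inr (e i, k) : UserGB V)) (fun a b hab => by simpa using hab)
        exact ⟨k, by simp [hiB, hk1], hk2⟩
    choose le hle1 hle2 using hle
    set θ : Sum (Fin N) (Fin N) → Option (UserGB V) := fun s =>
      match s with
      | Sum.inl i => some (Sum.inl (v i, jv i))
      | Sum.inr i => some (Sum.inr (e i, le i)) with hθ
    have hdom : ∀ s, θ s ≠ none := by
      intro s; cases s <;> simp [hθ]
    have hUV : ∀ i, (Sum.inl (v i, jv i) : UserGB V) ∈ UVfin V t :=
      fun i => mem_UVfin.mpr ⟨v i, jv i, hjv1 i, rfl⟩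
    have hUE : ∀ i, (Sum.inr (e i, le i) : UserGB V) ∈ UEfin G B t :=
      fun i => (mem_UEfin G).mpr ⟨e i, le i, hEF i, hle1 i, rfl⟩
    have hUfull : ∀ s u, θ s = some u → u ∈ UVfin V t ∪ UEfin G B t := by
      intro s u hsu
      cases s with
      | inl i =>
        have hu : u = Sum.inl (v i, jv i) := (Option.some.inj hsu).symm
        rw [hu]; exact Finset.mem_union_left _ (hUV i)
      | inr i =>
        have hu : u = Sum.inr (e i, le i) := (Option.some.inj hsu).symm
        rw [hu]; exact Finset.mem_union_right _ (hUE i)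
    refine ⟨θ, ⟨⟨⟨fun s u hsu => ⟨Finset.mem_univ s, hUfull s u hsu⟩,
      fun s₁ s₂ _ _ _ h12 hne => absurd h12 hne⟩,
      fun s _ => hdom s⟩, ?_, ?_⟩, ?_⟩
    · -- authorization
      intro s u hsu
      cases s with
      | inl i =>
        have hu : u = Sum.inl (v i, jv i) := (Option.some.inj hsu).symm
        subst hu
        exact hUV i
      | inr i =>
        have hu : u = Sum.inr (e i, le i) := (Option.some.inj hsu).symm
        subst hu
        exact hUE i
    · -- constraints
      rintro c ((⟨i, rfl⟩ | ⟨i, rfl⟩) | ⟨i, i', hii, rfl⟩) -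
      · refine restrictTo_mem_entCon _ _ _ _ θ hdom hUfull
          (Sum.inl (v i, jv i)) (Sum.inr (e i, le i)) rfl rfl ?_
        exact ⟨e i, le i, v i, jv i, rfl, rfl, hEG i,
          by rw [(hve i).2]; exact Sym2.mem_mk_left _ _⟩
      · refine restrictTo_mem_entCon _ _ _ _ θ hdom hUfull
          (Sum.inr (e i, le i)) (Sum.inl (v (nextFin i), jv (nextFin i))) rfl rfl ?_
        exact ⟨e i, le i, v (nextFin i), jv (nextFin i), rfl, rfl, hEG i,
          by rw [(hve i).2]; exact Sym2.mem_mk_right _ _⟩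
      · refine restrictTo_mem_entCon _ _ _ _ θ hdom hUfull
          (Sum.inl (v i, jv i)) (Sum.inl (v i', jv i')) rfl rfl ?_
        exact ⟨v i, jv i, v i', jv i', rfl, rfl, fun hvv => (Fin.ne_of_lt hii) (hinj hvv)⟩
    · -- avoids
      intro s u hsu
      cases s with
      | inl i =>
        have hu : u = Sum.inl (v i, jv i) := (Option.some.inj hsu).symm
        subst hu; exact hjv2 i
      | inr i =>
        have hu : u = Sum.inr (e i, le i) := (Option.some.inj hsu).symm
        subst hu; exact hle2 i
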